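/- Let m ≥ 3 be odd and set n = (m−1)/2. Index rows/columns by 0, 1, …, n, ε. Define the (n+2)×(n+2) symmetric matrix Ω over ℚ(q) by: Ω_{00} = q^{2m}; Ω_{0j} = q^{m+j} + q^{2m−j} for 1 ≤ j ≤ n; Ω_{ij} = q^{m+|i−j|} + q^{m+i+j} + q^{2m−i−j} + q^{2m−|i−j|} for 1 ≤ i, j ≤ n; Ω_{0ε} = q^{m}; Ω_{iε} = q^{m+i} + q^{2m−i}; Ω_{εε} = q^{2m}. Define P by: P_{00} = 1, P_{01} = 1, P_{0j} = 0 for 2 ≤ j ≤ n, P_{0ε} = 1; for 1 ≤ i ≤ n: P_{ii} = q, P_{ij} = 0 for j ≠ i with 1 ≤ j ≤ n, P_{iε} = q^{i} + q^{m−i}, and P_{i0} = 0; P_{ε,j} = 0 for j ≠ ε and P_{εε} = q^{m}. Define Λ block diagonal by: Λ_{00} = (q^{m}−1)(q^{m}−q^{m−2}); Λ_{ij} = q^{−2}(q^{m}−1)(q^{m−|i−j|} + q^{i+j}) for 1 ≤ i, j ≤ n; Λ_{εε} = 1; all other entries 0. Then P Λ Pᵀ = Ω. -/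

import Mathlib

open LaurentPolynomial

/-- Entries of the matrix `Ω` for the dihedral group `I₂(m)`, `m` odd, with
`n = (m-1)/2`; rows/columns indexed by `0, 1, …, n, ε` where `ε` is index `n+1`. -/
noncomputable def dihOmega (m n i j : ℕ) : LaurentPolynomial ℤ :=
  if i = 0 ∧ j = 0 then T (2 * m)
  else if i = 0 ∧ j ≤ n then T ((m : ℤ) + j) + T (2 * m - j)
  else if j = 0 ∧ i ≤ n then T ((m : ℤ) + i) + T (2 * m - i)
  else if i ≤ n ∧ j ≤ n then
    T ((m : ℤ) + |(i : ℤ) - j|) + T ((m : ℤ) + i + j) + T (2 * m - i - j) +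
      T (2 * m - |(i : ℤ) - j|)
  else if i = 0 ∨ j = 0 then T (m : ℤ)
  else if i ≤ n then T ((m : ℤ) + i) + T (2 * m - i)
  else if j ≤ n then T ((m : ℤ) + j) + T (2 * m - j)
  else T (2 * m)

/-- Entries of the matrix `P` for `I₂(m)`, `m` odd, with classes
`C₀ = {χ₀} > C₁ = {χ₁, …, χ_n} > C_ε = {ε}`. -/
noncomputable def dihP (m n i j : ℕ) : LaurentPolynomial ℤ :=
  if i = 0 then (if j = 0 ∨ j = 1 ∨ j = n + 1 then 1 else 0)
  else if i ≤ n then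
    (if j = i then T 1 else if j = n + 1 then T (i : ℤ) + T ((m : ℤ) - i) else 0)
  else (if j = n + 1 then T (m : ℤ) else 0)

/-- Entries of the block diagonal matrix `Λ` for `I₂(m)`, `m` odd. -/
noncomputable def dihLambda (m n i j : ℕ) : LaurentPolynomial ℤ :=
  if i = 0 ∧ j = 0 then (T (m : ℤ) - 1) * (T (m : ℤ) - T ((m : ℤ) - 2))
  else if 1 ≤ i ∧ i ≤ n ∧ 1 ≤ j ∧ j ≤ n then
    T (-2) * (T (m : ℤ) - 1) * (T ((m : ℤ) - |(i : ℤ) - j|) + T ((i : ℤ) + j))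
  else if i = n + 1 ∧ j = n + 1 then 1
  else 0

section helpers
variable (m n : ℕ)

lemma dihP_zero (j : ℕ) : dihP m n 0 j = if j = 0 ∨ j = 1 ∨ j = n+1 then 1 else 0 := by
  simp [dihP]

lemma dihP_mid {i : ℕ} (h1 : 1 ≤ i) (h2 : i ≤ n) (j : ℕ) :
    dihP m n i j = if j = i then T 1 else if j = n+1 then T (i:ℤ) + T ((m:ℤ) - i) else 0 := by
  rw [dihP, if_neg (by omega), if_pos h2]

lemma dihP_last (j : ℕ) : dihP m n (n+1) j = if j = n+1 then T (m:ℤ) else 0 := by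
  rw [dihP, if_neg (by omega), if_neg (by omega)]

lemma dihLambda_zero_eq {j : ℕ} (h : j ≠ 0) : dihLambda m n 0 j = 0 := by
  rw [dihLambda, if_neg (by omega), if_neg (by omega), if_neg (by omega)]

lemma dihLambda_mid {i : ℕ} (hi1 : 1 ≤ i) (hi2 : i ≤ n) (j : ℕ) :
    dihLambda m n i j = if 1 ≤ j ∧ j ≤ n then
      T (-2) * (T (m:ℤ) - 1) * (T ((m:ℤ) - |(i:ℤ) - j|) + T ((i:ℤ) + j)) else 0 := by
  rw [dihLambda, if_neg (by omega)]
  by_cases hj : 1 ≤ j ∧ j ≤ n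
  · rw [if_pos ⟨hi1, hi2, hj.1, hj.2⟩, if_pos hj]
  · rw [if_neg (by omega), if_neg (by omega), if_neg hj]

lemma dihLambda_last (j : ℕ) : dihLambda m n (n+1) j = if j = n+1 then 1 else 0 := by
  rw [dihLambda, if_neg (by omega), if_neg (by omega)]
  by_cases hj : j = n+1
  · rw [if_pos ⟨rfl, hj⟩, if_pos hj]
  · rw [if_neg (by omega), if_neg hj]

-- inner sums
lemma inner_zero (hn : 1 ≤ n) (j : Fin (n+2)) :
    ∑ l : Fin (n+2), dihLambda m n 0 l.1 * dihP m n j.1 l.1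
      = (T (m:ℤ) - 1) * (T (m:ℤ) - T ((m:ℤ) - 2)) * dihP m n j.1 0 := by
  rw [Fintype.sum_eq_single (0 : Fin (n+2))]
  · simp only [Fin.val_zero]
    rw [dihLambda, if_pos ⟨rfl, rfl⟩]
  · intro x hx
    rw [dihLambda_zero_eq m n (fun h => hx (Fin.ext (by simp [h]))), zero_mul]

lemma inner_last (hn : 1 ≤ n) (j : Fin (n+2)) :
    ∑ l : Fin (n+2), dihLambda m n (n+1) l.1 * dihP m n j.1 l.1 = dihP m n j.1 (n+1) := by
  rw [Fintype.sum_eq_single (Fin.last (n+1))]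
  · simp only [Fin.val_last]
    rw [dihLambda_last, if_pos rfl, one_mul]
  · intro x hx
    rw [dihLambda_last, if_neg (by simpa [Fin.ext_iff] using hx), zero_mul]

lemma inner_mid0 (hn : 1 ≤ n) {k : ℕ} (hk1 : 1 ≤ k) (hk2 : k ≤ n) :
    ∑ l : Fin (n+2), dihLambda m n k l.1 * dihP m n 0 l.1 = dihLambda m n k 1 := by
  rw [Fintype.sum_eq_single (1 : Fin (n+2))]
  · simp only [Fin.val_one]
    rw [dihP_zero, if_pos (by omega), mul_one]
  · intro x hx
    have hx1 : x.1 ≠ 1 := by simpa [Fin.ext_iff] using hx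
    have hxlt := x.2
    rcases eq_or_ne x.1 0 with h0 | h0
    · rw [dihLambda_mid m n hk1 hk2, if_neg (by omega), zero_mul]
    · rcases Nat.lt_or_ge x.1 (n+1) with hl | hl
      · rw [dihP_zero, if_neg (by omega), mul_zero]
      · rw [dihLambda_mid m n hk1 hk2, if_neg (by omega), zero_mul]

lemma inner_midmid (hn : 1 ≤ n) {k : ℕ} (hk1 : 1 ≤ k) (hk2 : k ≤ n)
    {j : Fin (n+2)} (hj1 : 1 ≤ j.1) (hj2 : j.1 ≤ n) :
    ∑ l : Fin (n+2), dihLambda m n k l.1 * dihP m n j.1 l.1 = dihLambda m n k j.1 * T 1 := by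
  rw [Fintype.sum_eq_single j]
  · rw [dihP_mid m n hj1 hj2, if_pos rfl]
  · intro x hx
    have hx1 : x.1 ≠ j.1 := fun h => hx (Fin.ext h)
    rcases Nat.lt_or_ge x.1 (n+1) with hl | hl
    · rw [dihP_mid m n hj1 hj2, if_neg hx1, if_neg (by omega), mul_zero]
    · rw [dihLambda_mid m n hk1 hk2, if_neg (by omega), zero_mul]

lemma inner_midlast (hn : 1 ≤ n) {k : ℕ} (hk1 : 1 ≤ k) (hk2 : k ≤ n) :
    ∑ l : Fin (n+2), dihLambda m n k l.1 * dihP m n (n+1) l.1 = 0 := by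
  apply Finset.sum_eq_zero
  intro x _
  rcases Nat.lt_or_ge x.1 (n+1) with hl | hl
  · rw [dihP_last, if_neg (by omega), mul_zero]
  · rw [dihLambda_mid m n hk1 hk2, if_neg (by omega), zero_mul]

end helpers

lemma sum3 {N : ℕ} {M : Type*} [AddCommMonoid M] (f : Fin N → M) (a b c : Fin N)
    (hab : a ≠ b) (hac : a ≠ c) (hbc : b ≠ c)
    (h : ∀ d, d ≠ a → d ≠ b → d ≠ c → f d = 0) :
    ∑ x, f x = f a + f b + f c := by
  have : ∑ x ∈ ({a, b, c} : Finset (Fin N)), f x = ∑ x : Fin N, f x := by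
    apply Finset.sum_subset (Finset.subset_univ _)
    intro x _ hx
    simp only [Finset.mem_insert, Finset.mem_singleton, not_or] at hx
    exact h x hx.1 hx.2.1 hx.2.2
  rw [← this, Finset.sum_insert (by simp [hab, hac]), Finset.sum_pair hbc, add_assoc]

/-- For every odd `m ≥ 3`, the dihedral group `I₂(m)` admits a system of Green
functions with Springer representations `S = {χ₀, χ₁, ε}`: `P Λ Pᵀ = Ω`. -/
theorem green_functions_odd_dihedral (m : ℕ) (hm : Odd m) (hm3 : 3 ≤ m) :
    letI n := (m - 1) / 2
    letI Ω : Matrix (Fin (n + 2)) (Fin (n + 2)) (LaurentPolynomial ℤ) :=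
      Matrix.of fun i j => dihOmega m n i.1 j.1
    letI P : Matrix (Fin (n + 2)) (Fin (n + 2)) (LaurentPolynomial ℤ) :=
      Matrix.of fun i j => dihP m n i.1 j.1
    letI Λ : Matrix (Fin (n + 2)) (Fin (n + 2)) (LaurentPolynomial ℤ) :=
      Matrix.of fun i j => dihLambda m n i.1 j.1
    P * Λ * P.transpose = Ω := by
  set n := (m - 1) / 2 with hn
  have hmn : m = 2 * n + 1 := by obtain ⟨t, ht⟩ := hm; omega
  have hn1 : 1 ≤ n := by omega
  have tre : ∀ a b c : ℤ, a + b = c → (T a : LaurentPolynomial ℤ) * T b = T c :=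
    fun a b c h => by rw [← h, T_add]
  have tre3 : ∀ a b c d : ℤ, a + b + c = d → (T a : LaurentPolynomial ℤ) * T b * T c = T d :=
    fun a b c d h => by rw [← h, T_add, T_add]
  have tre4 : ∀ a b c d e : ℤ, a + b + c + d = e →
      (T a : LaurentPolynomial ℤ) * T b * T c * T d = T e :=
    fun a b c d e h => by rw [← h, T_add, T_add, T_add]
  rw [Matrix.mul_assoc]
  refine Matrix.ext fun i j => ?_
  rw [Matrix.mul_apply]
  simp only [Matrix.mul_apply, Matrix.transpose_apply, Matrix.of_apply]
  have hi2 := i.2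
  have hj2 := j.2
  rcases eq_or_ne i.1 0 with hi0 | hi0
  · -- row 0
    rw [sum3 _ (0 : Fin (n+2)) 1 (Fin.last (n+1))
        (by simp only [ne_eq, Fin.ext_iff, Fin.val_zero, Fin.val_one]; omega)
        (by simp only [ne_eq, Fin.ext_iff, Fin.val_zero, Fin.val_one, Fin.val_last]; omega)
        (by simp only [ne_eq, Fin.ext_iff, Fin.val_zero, Fin.val_one, Fin.val_last]; omega)
        (fun d hd0 hd1 hdl => by
          have h0 : d.1 ≠ 0 := fun h => hd0 (Fin.ext (by simp [h]))
          have h1 : d.1 ≠ 1 := by simpa [Fin.ext_iff] using hd1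
          have hl : d.1 ≠ n+1 := by simpa [Fin.ext_iff, Fin.val_last] using hdl
          rw [hi0, dihP_zero, if_neg (by omega), zero_mul])]
    simp only [Fin.val_zero, Fin.val_one, Fin.val_last, hi0]
    rw [inner_zero m n hn1 j, inner_last m n hn1 j]
    rcases eq_or_ne j.1 0 with hj0 | hj0
    · rw [hj0, inner_mid0 m n hn1 (le_refl 1) hn1]
      have p0 : dihP m n 0 0 = 1 := by rw [dihP_zero, if_pos (by omega)]
      have p1 : dihP m n 0 1 = 1 := by rw [dihP_zero, if_pos (by omega)]
      have pe : dihP m n 0 (n+1) = 1 := by rw [dihP_zero, if_pos (by omega)]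
      rw [p0, p1, pe, dihLambda_mid m n (le_refl 1) hn1 1, if_pos (by omega),
        dihOmega, if_pos ⟨rfl, rfl⟩]
      have h1 : (T (m:ℤ) : LaurentPolynomial ℤ) * T (m:ℤ) = T (2*(m:ℤ)) := tre _ _ _ (by ring)
      have h3 : (T (-2) : LaurentPolynomial ℤ) * T 2 = 1 := by
        rw [tre (-2) 2 0 (by ring), T_zero]
      have h4 : (T (-2) : LaurentPolynomial ℤ) * T (m:ℤ) = T ((m:ℤ) - 2) := tre _ _ _ (by ring)
      norm_num
      linear_combination h1 + T (m:ℤ) * h4 + T (m:ℤ) * h3 - h4 - h3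
    · rcases eq_or_ne j.1 (n+1) with hjl | hjl
      · rw [hjl, inner_midlast m n hn1 (le_refl 1) hn1]
        rw [dihP_zero, if_pos (by omega), dihP_zero, if_pos (by omega),
          dihP_zero, if_pos (by omega), dihP_last, if_neg (by omega),
          dihP_last, if_pos rfl, dihOmega, if_neg (by omega), if_neg (by omega),
          if_neg (by omega), if_neg (by omega), if_pos (by omega)]
        ring
      · have hj1 : 1 ≤ j.1 := by omega
        have hjn : j.1 ≤ n := by omega
        rw [inner_midmid m n hn1 (le_refl 1) hn1 hj1 hjn]
        have p0 : dihP m n 0 0 = 1 := by rw [dihP_zero, if_pos (by omega)]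
        have p1 : dihP m n 0 1 = 1 := by rw [dihP_zero, if_pos (by omega)]
        have pe : dihP m n 0 (n+1) = 1 := by rw [dihP_zero, if_pos (by omega)]
        rw [p0, p1, pe, dihP_mid m n hj1 hjn 0, if_neg (by omega), if_neg (by omega),
          dihP_mid m n hj1 hjn (n+1), if_neg (by omega), if_pos rfl,
          dihLambda_mid m n (le_refl 1) hn1 j.1, if_pos ⟨hj1, hjn⟩,
          dihOmega, if_neg (by omega), if_pos ⟨rfl, hjn⟩]
        push_cast
        rw [show |(1:ℤ) - (j.1:ℤ)| = (j.1:ℤ) - 1 by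
          rw [abs_sub_comm]; exact abs_of_nonneg (by omega)]
        have r1 : (T (-2) : LaurentPolynomial ℤ) * T 1 * T (m:ℤ) * T ((m:ℤ) - ((j.1:ℤ) - 1))
            = T (2*(m:ℤ) - j.1) := tre4 _ _ _ _ _ (by ring)
        have r3 : (T (-2) : LaurentPolynomial ℤ) * T 1 * T (m:ℤ) * T (1 + (j.1:ℤ))
            = T ((m:ℤ) + j.1) := tre4 _ _ _ _ _ (by ring)
        have r2 : (T (-2) : LaurentPolynomial ℤ) * T 1 * T ((m:ℤ) - ((j.1:ℤ) - 1))
            = T ((m:ℤ) - j.1) := tre3 _ _ _ _ (by ring)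
        have r4 : (T (-2) : LaurentPolynomial ℤ) * T 1 * T (1 + (j.1:ℤ))
            = T (j.1:ℤ) := tre3 _ _ _ _ (by ring)
        linear_combination r1 + r3 - r2 - r4
  · rcases eq_or_ne i.1 (n+1) with hil | hil
    · -- row ε
      rw [Fintype.sum_eq_single (Fin.last (n+1))
          (fun x hx => by
            have : x.1 ≠ n+1 := by simpa [Fin.ext_iff, Fin.val_last] using hx
            rw [hil, dihP_last, if_neg this, zero_mul])]
      simp only [Fin.val_last, hil]
      rw [inner_last m n hn1 j, dihP_last, if_pos rfl]
      rcases eq_or_ne j.1 0 with hj0 | hj0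
      · rw [hj0]
        rw [dihP_zero, if_pos (by omega), mul_one, dihOmega, if_neg (by omega),
          if_neg (by omega), if_neg (by omega), if_neg (by omega), if_pos (by omega)]
      · rcases eq_or_ne j.1 (n+1) with hjl | hjl
        · rw [hjl]
          rw [dihP_last, if_pos rfl, dihOmega, if_neg (by omega), if_neg (by omega),
            if_neg (by omega), if_neg (by omega), if_neg (by omega), if_neg (by omega),
            if_neg (by omega)]
          exact tre _ _ _ (by ring)
        · have hj1 : 1 ≤ j.1 := by omega
          have hjn : j.1 ≤ n := by omega
          rw [dihP_mid m n hj1 hjn (n+1), if_neg (by omega), if_pos rfl,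
            dihOmega, if_neg (by omega), if_neg (by omega), if_neg (by omega),
            if_neg (by omega), if_neg (by omega), if_neg (by omega), if_pos hjn]
          have ra : (T (m:ℤ) : LaurentPolynomial ℤ) * T (j.1:ℤ) = T ((m:ℤ) + j.1) :=
            tre _ _ _ (by ring)
          have rb : (T (m:ℤ) : LaurentPolynomial ℤ) * T ((m:ℤ) - j.1) = T (2*(m:ℤ) - j.1) :=
            tre _ _ _ (by ring)
          linear_combination ra + rb
    · -- row mid
      have hi1 : 1 ≤ i.1 := by omega
      have hin : i.1 ≤ n := by omega
      rw [Fintype.sum_eq_add i (Fin.last (n+1))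
          (by simp only [ne_eq, Fin.ext_iff, Fin.val_zero, Fin.val_one, Fin.val_last]; omega)
          (fun x hx => by
            have h1 : x.1 ≠ i.1 := fun h => hx.1 (Fin.ext h)
            have h2 : x.1 ≠ n+1 := by simpa [Fin.ext_iff, Fin.val_last] using hx.2
            rw [dihP_mid m n hi1 hin, if_neg h1, if_neg h2, zero_mul])]
      simp only [Fin.val_last]
      rw [inner_last m n hn1 j, dihP_mid m n hi1 hin, dihP_mid m n hi1 hin,
          if_pos rfl, if_neg (by omega), if_pos rfl]
      rcases eq_or_ne j.1 0 with hj0 | hj0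
      · rw [hj0, inner_mid0 m n hn1 hi1 hin]
        rw [dihP_zero, if_pos (by omega), mul_one,
          dihLambda_mid m n hi1 hin 1, if_pos (by omega),
          dihOmega, if_neg (by omega), if_neg (by omega), if_pos ⟨rfl, hin⟩]
        push_cast
        rw [show |(i.1:ℤ) - (1:ℤ)| = (i.1:ℤ) - 1 from abs_of_nonneg (by omega)]
        have r1 : (T 1 : LaurentPolynomial ℤ) * T (-2) * T (m:ℤ) * T ((m:ℤ) - ((i.1:ℤ) - 1))
            = T (2*(m:ℤ) - i.1) := tre4 _ _ _ _ _ (by ring)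
        have r3 : (T 1 : LaurentPolynomial ℤ) * T (-2) * T (m:ℤ) * T ((i.1:ℤ) + 1)
            = T ((m:ℤ) + i.1) := tre4 _ _ _ _ _ (by ring)
        have r2 : (T 1 : LaurentPolynomial ℤ) * T (-2) * T ((m:ℤ) - ((i.1:ℤ) - 1))
            = T ((m:ℤ) - i.1) := tre3 _ _ _ _ (by ring)
        have r4 : (T 1 : LaurentPolynomial ℤ) * T (-2) * T ((i.1:ℤ) + 1)
            = T (i.1:ℤ) := tre3 _ _ _ _ (by ring)
        linear_combination r1 + r3 - r2 - r4
      · rcases eq_or_ne j.1 (n+1) with hjl | hjl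
        · rw [hjl, inner_midlast m n hn1 hi1 hin]
          rw [dihP_last, if_pos rfl,
            dihOmega, if_neg (by omega), if_neg (by omega), if_neg (by omega),
            if_neg (by omega), if_neg (by omega), if_pos hin]
          have ra : (T (i.1:ℤ) : LaurentPolynomial ℤ) * T (m:ℤ) = T ((m:ℤ) + i.1) :=
            tre _ _ _ (by ring)
          have rb : (T ((m:ℤ) - i.1) : LaurentPolynomial ℤ) * T (m:ℤ) = T (2*(m:ℤ) - i.1) :=
            tre _ _ _ (by ring)
          linear_combination ra + rb
        · have hj1 : 1 ≤ j.1 := by omega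
          have hjn : j.1 ≤ n := by omega
          rw [inner_midmid m n hn1 hi1 hin hj1 hjn]
          rw [dihP_mid m n hj1 hjn (n+1), if_neg (by omega), if_pos rfl,
            dihLambda_mid m n hi1 hin j.1, if_pos ⟨hj1, hjn⟩,
            dihOmega, if_neg (by omega), if_neg (by omega), if_neg (by omega),
            if_pos ⟨hin, hjn⟩]
          have hE : (T 1 : LaurentPolynomial ℤ) * T (-2) * T 1 = 1 := by
            rw [tre3 1 (-2) 1 0 (by ring), T_zero]
          have rAC : (T (m:ℤ) : LaurentPolynomial ℤ) * T ((i.1:ℤ) + j.1)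
              = T ((m:ℤ) + i.1 + j.1) := tre _ _ _ (by ring)
          have r0 : (T (i.1:ℤ) : LaurentPolynomial ℤ) * T (j.1:ℤ) = T ((i.1:ℤ) + j.1) :=
            tre _ _ _ (by ring)
          have r3 : (T ((m:ℤ) - i.1) : LaurentPolynomial ℤ) * T ((m:ℤ) - j.1)
              = T (2*(m:ℤ) - i.1 - j.1) := tre _ _ _ (by ring)
          rcases le_total i.1 j.1 with hij | hij
          · rw [show |(i.1:ℤ) - (j.1:ℤ)| = (j.1:ℤ) - i.1 by
              rw [abs_sub_comm]; exact abs_of_nonneg (by omega)]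
            have rAB : (T (m:ℤ) : LaurentPolynomial ℤ) * T ((m:ℤ) - ((j.1:ℤ) - i.1))
                = T (2*(m:ℤ) - ((j.1:ℤ) - i.1)) := tre _ _ _ (by ring)
            have r1 : (T (i.1:ℤ) : LaurentPolynomial ℤ) * T ((m:ℤ) - j.1)
                = T ((m:ℤ) - ((j.1:ℤ) - i.1)) := tre _ _ _ (by ring)
            have r2 : (T ((m:ℤ) - i.1) : LaurentPolynomial ℤ) * T (j.1:ℤ)
                = T ((m:ℤ) + ((j.1:ℤ) - i.1)) := tre _ _ _ (by ring)
            linear_combination ((T (m:ℤ) - 1) * (T ((m:ℤ) - ((j.1:ℤ) - i.1))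
              + T ((i.1:ℤ) + j.1))) * hE + rAB + rAC + r0 + r1 + r2 + r3
          · rw [show |(i.1:ℤ) - (j.1:ℤ)| = (i.1:ℤ) - j.1 from abs_of_nonneg (by omega)]
            have rAB : (T (m:ℤ) : LaurentPolynomial ℤ) * T ((m:ℤ) - ((i.1:ℤ) - j.1))
                = T (2*(m:ℤ) - ((i.1:ℤ) - j.1)) := tre _ _ _ (by ring)
            have r1 : (T (i.1:ℤ) : LaurentPolynomial ℤ) * T ((m:ℤ) - j.1)
                = T ((m:ℤ) + ((i.1:ℤ) - j.1)) := tre _ _ _ (by ring)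
            have r2 : (T ((m:ℤ) - i.1) : LaurentPolynomial ℤ) * T (j.1:ℤ)
                = T ((m:ℤ) - ((i.1:ℤ) - j.1)) := tre _ _ _ (by ring)
            linear_combination ((T (m:ℤ) - 1) * (T ((m:ℤ) - ((i.1:ℤ) - j.1))
              + T ((i.1:ℤ) + j.1))) * hE + rAB + rAC + r0 + r1 + r2 + r3
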